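/- arXiv:2102.01056 — 3 statements merged into one kernel-verified Lean document; each statement's English description precedes it below -/
import Mathlib

section
/- The Fuss-Catalan numbers C_{n,a} = (1/(an+1)) * binom(an+1, n) satisfy the Lagrange-type identity: if y(q) is the formal power series solution of y(y+1)^a = q with y(0)=0 and a ≥ 0 is an integer, then 1/(1+y(q)) = Σ_{n≥0} C_{n,a+1} (-q)^n. -/
open PowerSeries

/-- The Fuss–Catalan numbers `C_{n,a} = (1/(an+1)) * choose (an+1) n` as rationals. -/
noncomputable def fussCatalan (n a : ℕ) : ℚ :=
  (1 / (a * n + 1 : ℚ)) * (Nat.choose (a * n + 1) n : ℚ)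

/-- `D p n r = (r/(r+pn)) * choose (r+pn) n`, the generalized Fuss–Catalan numbers. -/
noncomputable def D (p n r : ℕ) : ℚ :=
  (r : ℚ) / ((r : ℚ) + (p : ℚ) * n) * (Nat.choose (r + p * n) n : ℚ)

lemma D_zero_right (p n : ℕ) : D p n 0 = 0 := by simp [D]

lemma D_zero_left (p r : ℕ) (hr : 1 ≤ r) : D p 0 r = 1 := by
  have : (r : ℚ) ≠ 0 := by exact_mod_cast Nat.one_le_iff_ne_zero.mp hr
  simp [D, this]

lemma key (A B r n p : ℚ) (h1 : r + p*(n+1) ≠ 0) (h2 : r + p*(n+1)+1 ≠ 0)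
    (hrel : A*(n+1) = B*((r+p*(n+1))-n)) :
    (r+1)/((r+p*(n+1))+1)*(B+A) = r/(r+p*(n+1))*A + (r+p)/(r+p*(n+1))*B := by
  have expand : (r+1)/((r+p*(n+1))+1)*(B+A) - (r/(r+p*(n+1))*A + (r+p)/(r+p*(n+1))*B)
      = p * (A*(n+1) - B*((r+p*(n+1))-n)) / ((r+p*(n+1))*((r+p*(n+1))+1)) := by
    field_simp
    ring
  have h3 : A*(n+1) - B*((r+p*(n+1))-n) = 0 := by linarith
  rw [h3] at expand
  simp at expand
  linarith

lemma D_rec (p n r : ℕ) (hp : 0 < p) :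
    D p (n+1) (r+1) = D p (n+1) r + D p n (r+p) := by
  have hp' : (0:ℚ) < p := by exact_mod_cast hp
  have e1 : r + 1 + p * (n+1) = (r + p*(n+1)) + 1 := by ring
  have e2 : r + p + p * n = r + p*(n+1) := by ring
  have hpas : Nat.choose (r + p*(n+1) + 1) (n+1)
      = Nat.choose (r + p*(n+1)) n + Nat.choose (r + p*(n+1)) (n+1) :=
    Nat.choose_succ_succ _ _
  have hnM : n ≤ r + p*(n+1) := by nlinarith [Nat.le_mul_of_pos_left (n+1) hp]
  have hrel : (Nat.choose (r + p*(n+1)) (n+1) : ℚ) * ((n:ℚ)+1)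
      = (Nat.choose (r + p*(n+1)) n : ℚ) * (((r:ℚ) + (p:ℚ)*((n:ℚ)+1)) - n) := by
    have h := Nat.choose_succ_right_eq (r + p*(n+1)) n
    calc (Nat.choose (r + p*(n+1)) (n+1) : ℚ) * ((n:ℚ)+1)
        = ((Nat.choose (r + p*(n+1)) (n+1) * (n+1) : ℕ) : ℚ) := by push_cast; ring
      _ = ((Nat.choose (r + p*(n+1)) n * (r + p*(n+1) - n) : ℕ) : ℚ) := by rw [h]
      _ = _ := by push_cast [hnM]; ring
  have h1 : (r:ℚ) + (p:ℚ)*((n:ℚ)+1) ≠ 0 := by positivity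
  have h2 : (r:ℚ) + (p:ℚ)*((n:ℚ)+1) + 1 ≠ 0 := by positivity
  have hk := key (Nat.choose (r + p*(n+1)) (n+1) : ℚ) (Nat.choose (r + p*(n+1)) n : ℚ)
    r n p h1 h2 hrel
  unfold D
  rw [e1, e2, hpas]
  push_cast
  linear_combination hk

lemma D_shift (p n : ℕ) (hp : 0 < p) : D p (n+1) 1 = D p n p := by
  have hp' : (0:ℚ) < p := by exact_mod_cast hp
  have e1 : 1 + p * (n+1) = (p + p*n) + 1 := by ring
  unfold D
  rw [e1]
  have h := Nat.add_one_mul_choose_eq (p + p*n) n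
  have hcast : ((p + p*n + 1 : ℕ):ℚ) * (Nat.choose (p + p*n) n : ℚ)
      = (Nat.choose (p + p*n + 1) (n+1) : ℚ) * ((n:ℚ)+1) := by
    exact_mod_cast congrArg (Nat.cast : ℕ → ℚ) h
  have h1 : (1:ℚ) + (p:ℚ)*((n:ℚ)+1) ≠ 0 := by positivity
  have h2 : (p:ℚ) + (p:ℚ)*(n:ℚ) ≠ 0 := by positivity
  push_cast
  push_cast at hcast
  field_simp
  linear_combination (-1:ℚ) * hcast

lemma HR (p : ℕ) (hp : 0 < p) :
    ∀ n r s : ℕ, 1 ≤ r → 1 ≤ s →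
      ∑ k ∈ Finset.range (n+1), D p k r * D p (n-k) s = D p n (r+s) := by
  intro n
  induction n using Nat.strong_induction_on with
  | _ n ih =>
    obtain _ | m := n
    · intro r s hr hs
      simp [D_zero_left p r hr, D_zero_left p s hs,
        D_zero_left p (r+s) (le_trans hr (Nat.le_add_right r s))]
    · intro r s hr hs
      have ihm := ih m (Nat.lt_succ_self m)
      induction r, hr using Nat.le_induction with
      | base =>
        rw [Finset.sum_range_succ']
        simp only [Nat.succ_sub_succ, Nat.sub_zero]
        have hterm : ∀ k, D p (k+1) 1 * D p (m-k) s = D p k p * D p (m-k) s := by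
          intro k
          have := D_rec p k 0 hp
          simp only [Nat.zero_add] at this
          rw [this, D_zero_right, zero_add]
        rw [Finset.sum_congr rfl (fun k _ => hterm k)]
        rw [ihm p s (Nat.one_le_iff_ne_zero.mpr hp.ne') hs]
        rw [D_zero_left p 1 le_rfl]
        have := D_rec p m s hp
        have es : s + 1 = 1 + s := by omega
        have ep : s + p = p + s := by omega
        rw [es, ep] at this
        rw [this]
        ring
      | succ r hr ihr =>
        rw [Finset.sum_range_succ']
        simp only [Nat.succ_sub_succ, Nat.sub_zero]
        have hterm : ∀ k, D p (k+1) (r+1) * D p (m-k) s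
            = D p (k+1) r * D p (m-k) s + D p k (r+p) * D p (m-k) s := by
          intro k
          rw [D_rec p k r hp, add_mul]
        rw [Finset.sum_congr rfl (fun k _ => hterm k), Finset.sum_add_distrib]
        have h2nd : ∑ k ∈ Finset.range (m+1), D p k (r+p) * D p (m-k) s = D p m (r+p+s) :=
          ihm (r+p) s (by omega) hs
        have h1st : ∑ k ∈ Finset.range (m+1), D p (k+1) r * D p (m-k) s
            = D p (m+1) (r+s) - D p 0 r * D p (m+1) s := by
          have h4 := Finset.sum_range_succ' (fun k => D p k r * D p (m+1-k) s) (m+1)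
          simp only [Nat.succ_sub_succ, Nat.sub_zero] at h4
          rw [ihr] at h4
          linarith
        rw [h1st, h2nd, D_zero_left p r hr, D_zero_left p (r+1) (by omega)]
        have := D_rec p m (r+s) hp
        have e3 : r + 1 + s = r + s + 1 := by omega
        have e4 : r + p + s = r + s + p := by omega
        rw [e3, this, e4]
        ring

open Finset in
lemma coeff_pow_eq (p : ℕ) (hp : 0 < p) (g : PowerSeries ℚ)
    (hg : ∀ n, (coeff n) g = (-1)^n * D p n 1) :
    ∀ r, 1 ≤ r → ∀ n, (coeff n) (g ^ r) = (-1)^n * D p n r := by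
  intro r hr
  induction r, hr using Nat.le_induction with
  | base => simpa using hg
  | succ r hr ih =>
    intro n
    rw [pow_succ, PowerSeries.coeff_mul, Finset.Nat.sum_antidiagonal_eq_sum_range_succ_mk]
    have hterm : ∀ k ∈ range (n+1),
        (coeff k) (g^r) * (coeff (n-k)) g = (-1)^n * (D p k r * D p (n-k) 1) := by
      intro k hk
      rw [ih k, hg (n-k)]
      have hkn : k ≤ n := by
        simpa using Nat.lt_succ_iff.mp (Finset.mem_range.mp hk)
      have : (-1:ℚ)^k * (-1:ℚ)^(n-k) = (-1)^n := by
        rw [← pow_add, Nat.add_sub_cancel' hkn]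
      linear_combination (D p k r * D p (n-k) 1) * this
    rw [Finset.sum_congr rfl hterm, ← Finset.mul_sum,
      HR p hp n r 1 hr le_rfl]

/-- If `y(q)` is the formal power series solution of `y(y+1)^a = q` with `y(0) = 0` and
`a ≥ 0`, then `1/(1+y(q)) = Σ_{n≥0} C_{n,a+1} (-q)^n`. -/
theorem fussCatalan_lagrange_nonneg (a : ℕ) (y : PowerSeries ℚ)
    (h0 : constantCoeff y = 0) (hy : y * (y + 1) ^ a = X) :
    (1 + y)⁻¹ = PowerSeries.mk fun n => fussCatalan n (a + 1) * (-1) ^ n := by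
  have hp : 0 < a + 1 := Nat.succ_pos a
  set g : PowerSeries ℚ := PowerSeries.mk fun n => fussCatalan n (a + 1) * (-1) ^ n with hgdef
  have hg : ∀ n, (coeff n) g = (-1)^n * D (a+1) n 1 := by
    intro n
    rw [hgdef, PowerSeries.coeff_mk]
    unfold fussCatalan D
    rw [show 1 + (a+1) * n = (a+1) * n + 1 from by omega]
    push_cast
    ring
  -- functional equation for g
  have hgfe : g = 1 - X * g ^ (a+1) := by
    ext n
    obtain _ | n := n
    · have : (coeff 0) g = 1 := by
        rw [hgdef, PowerSeries.coeff_mk]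
        simp [fussCatalan]
      rw [this]
      simp
    · rw [hg (n+1), map_sub, PowerSeries.coeff_succ_X_mul,
        coeff_pow_eq (a+1) hp g hg (a+1) hp n, D_shift (a+1) n hp]
      have : (coeff (n+1)) (1 : PowerSeries ℚ) = 0 := by
        rw [PowerSeries.coeff_one]
        simp
      rw [this]
      ring
  -- u := (1+y)⁻¹ satisfies the same functional equation
  have hc : constantCoeff (1+y) ≠ 0 := by simp [h0]
  have hmul : (1+y) * (1+y)⁻¹ = 1 := PowerSeries.mul_inv_cancel _ hc
  set u : PowerSeries ℚ := (1+y)⁻¹ with hudef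
  have hmul' : (y+1) * u = 1 := by rw [add_comm y 1]; exact hmul
  have hXu : X * u^(a+1) = y * u := by
    have h1 : X * u^(a+1) = ((y+1) * u)^a * (y * u) := by
      rw [mul_pow, ← hy]; ring
    rw [h1, hmul', one_pow, one_mul]
  have hu : u = 1 - X * u^(a+1) := by
    rw [hXu]
    linear_combination hmul
  -- uniqueness
  have hgeom := geom_sum₂_mul u g (a+1)
  have hdiff : (u - g) * (1 + X * ∑ i ∈ Finset.range (a+1), u^i * g^(a+1-1-i)) = 0 := by
    linear_combination hu - hgfe + X * hgeom
  rcases mul_eq_zero.mp hdiff with h | h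
  · rw [sub_eq_zero] at h
    exact h
  · exfalso
    have := congrArg (constantCoeff) h
    simp at this
end

section
/- Classical Lagrange inversion: if h(x) is the unique formal power series with h(0)=0 satisfying h(x) = x·Q(h(x)) for Q a power series with invertible constant term, then for any power series φ with φ(0)=0 and all n>0: [x^n] φ(h(x)) = (1/n)·[t^{n-1}](φ'(t)·Q(t)^n). -/
open PowerSeries

/-- Composition of formal power series (substitution of `g`, with `g(0)=0`, into `f`). -/
noncomputable def pcomp {R : Type*} [CommRing R] (f g : PowerSeries R) : PowerSeries R :=
  PowerSeries.mk fun n => ∑ k ∈ Finset.range (n + 1),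
    PowerSeries.coeff (R := R) k f * PowerSeries.coeff (R := R) n (g ^ k)

open Finset

namespace LagAux

variable {R : Type*} [CommRing R]

theorem coeff_derivativeFun' (f : R⟦X⟧) (n : ℕ) :
    coeff (R := R) n (derivativeFun f) = coeff (n + 1) f * (n + 1) :=
  coeff_derivative f n

theorem coeff_pcomp (f g : PowerSeries R) (n : ℕ) :
    coeff (R := R) n (pcomp f g) = ∑ k ∈ Finset.range (n + 1),
      coeff (R := R) k f * coeff (R := R) n (g ^ k) := by
  simp [pcomp]

theorem coeff_pow_eq_zero {h : PowerSeries R} (h0 : constantCoeff (R := R) h = 0)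
    {c a : ℕ} (hac : a < c) : coeff (R := R) a (h ^ c) = 0 := by
  have hd : (X : PowerSeries R) ^ c ∣ h ^ c :=
    pow_dvd_pow_of_dvd (X_dvd_iff.mpr h0) c
  exact X_pow_dvd_iff.mp hd a hac

theorem swap_mul (F h v : PowerSeries R) (h0 : constantCoeff (R := R) h = 0) (m : ℕ) :
    coeff (R := R) m (pcomp F h * v) =
      ∑ c ∈ Finset.range (m + 1), coeff (R := R) c F * coeff (R := R) m (h ^ c * v) := by
  rw [coeff_mul]
  have step1 : ∀ p ∈ antidiagonal m,
      coeff (R := R) p.1 (pcomp F h) * coeff (R := R) p.2 v =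
        ∑ c ∈ Finset.range (m + 1),
          coeff (R := R) c F * (coeff (R := R) p.1 (h ^ c) * coeff (R := R) p.2 v) := by
    intro p hp
    rw [coeff_pcomp]
    rw [Finset.sum_mul]
    rw [← Finset.sum_subset (Finset.range_subset_range.mpr
      (Nat.succ_le_succ (Nat.le_of_lt_succ (Nat.lt_succ_of_le
        (Nat.le.intro (mem_antidiagonal.mp hp))))))]
    · exact Finset.sum_congr rfl fun c _ => by ring
    · intro c _ hc
      rw [coeff_pow_eq_zero h0 (Nat.lt_of_succ_le (Nat.le_of_not_lt
        (fun hlt => hc (Finset.mem_range.mpr hlt))))]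
      ring
  rw [Finset.sum_congr rfl step1, Finset.sum_comm]
  refine Finset.sum_congr rfl fun c _ => ?_
  rw [coeff_mul, Finset.mul_sum]

end LagAux

namespace LagAux
variable {R : Type*} [CommRing R]

theorem tri_sq (n : ℕ) (F : ℕ × ℕ → R) (hF : ∀ p : ℕ × ℕ, n < p.1 + p.2 → F p = 0) :
    ∑ k ∈ Finset.range (n + 1), ∑ p ∈ Finset.HasAntidiagonal.antidiagonal k, F p =
      ∑ c ∈ Finset.range (n + 1), ∑ d ∈ Finset.range (n + 1), F (c, d) := by
  rw [← Finset.sum_product']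
  rw [← Finset.sum_biUnion]
  · apply Finset.sum_subset
    · intro p hp
      simp only [Finset.mem_biUnion, Finset.mem_range, Finset.HasAntidiagonal.mem_antidiagonal] at hp
      obtain ⟨k, hk, rfl⟩ := hp
      simp only [Finset.mem_product, Finset.mem_range]
      omega
    · intro p hp hnp
      apply hF
      by_contra hle
      push_neg at hle
      exact hnp (Finset.mem_biUnion.mpr ⟨p.1 + p.2, Finset.mem_range.mpr (by omega),
        Finset.HasAntidiagonal.mem_antidiagonal.mpr rfl⟩)
  · intro a _ b _ hab
    simp only [Function.onFun, Finset.disjoint_left, Finset.HasAntidiagonal.mem_antidiagonal]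
    rintro p rfl h2
    exact hab (h2.symm ▸ rfl)

theorem pcomp_mul (f g h : PowerSeries R) (h0 : constantCoeff (R := R) h = 0) :
    pcomp (f * g) h = pcomp f h * pcomp g h := by
  ext n
  rw [swap_mul _ _ _ h0, coeff_pcomp]
  have e1 : ∀ c ∈ Finset.range (n + 1),
      coeff (R := R) c (f * g) * coeff (R := R) n (h ^ c) =
        ∑ p ∈ Finset.HasAntidiagonal.antidiagonal c, coeff (R := R) p.1 f * coeff (R := R) p.2 g * coeff (R := R) n (h ^ (p.1 + p.2)) := by
    intro c _
    rw [coeff_mul, Finset.sum_mul]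
    exact Finset.sum_congr rfl fun p hp => by rw [Finset.HasAntidiagonal.mem_antidiagonal.mp hp]
  rw [Finset.sum_congr rfl e1,
    tri_sq n _ (fun p hp => by rw [coeff_pow_eq_zero h0 hp, mul_zero])]
  refine Finset.sum_congr rfl fun c _ => ?_
  rw [mul_comm (h ^ c) (pcomp g h), swap_mul _ _ _ h0, Finset.mul_sum]
  refine Finset.sum_congr rfl fun d _ => ?_
  rw [← pow_add]
  ring_nf

theorem pcomp_one (h : PowerSeries R) : pcomp (1 : PowerSeries R) h = 1 := by
  ext n
  rw [coeff_pcomp]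
  rw [Finset.sum_eq_single 0]
  · simp
  · intro k _ hk
    rw [coeff_one, if_neg hk, zero_mul]
  · simp

theorem pcomp_pow (f h : PowerSeries R) (h0 : constantCoeff (R := R) h = 0) (n : ℕ) :
    pcomp (f ^ n) h = (pcomp f h) ^ n := by
  induction n with
  | zero => simpa using pcomp_one h
  | succ k ih => rw [pow_succ, pow_succ, pcomp_mul _ _ _ h0, ih]

end LagAux

namespace LagAux
variable {R : Type*} [CommRing R]

theorem derivativeFun_X' : derivativeFun (X : R⟦X⟧) = 1 := by
  ext n
  rw [coeff_derivativeFun', coeff_X, coeff_one]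
  rcases Nat.eq_zero_or_pos n with rfl | hn
  · norm_num
  · rw [if_neg (by omega), if_neg (by omega), zero_mul]

theorem derivativeFun_pow (f : R⟦X⟧) (k : ℕ) :
    derivativeFun (f ^ (k + 1)) = (k + 1) • (f ^ k * derivativeFun f) := by
  induction k with
  | zero => simp
  | succ j ih =>
    rw [pow_succ, derivativeFun_mul, ih, smul_eq_mul, smul_eq_mul]
    simp only [nsmul_eq_mul]
    push_cast
    ring

theorem atomK [Algebra ℚ R] (u w : R⟦X⟧) (huw : u * w = 1) (b : ℕ) (hb : 1 ≤ b) :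
    coeff (R := R) (b - 1) (w ^ b * derivativeFun (X * u)) = if b = 1 then 1 else 0 := by
  have dXu : derivativeFun (X * u) = u + X * derivativeFun u := by
    rw [derivativeFun_mul, derivativeFun_X', smul_eq_mul, smul_eq_mul, mul_one, add_comm]
  have key : w ^ b * derivativeFun (X * u) = w ^ (b - 1) + X * (w ^ b * derivativeFun u) := by
    rw [dXu, mul_add]
    congr 1
    · calc w ^ b * u = w ^ (b - 1) * (u * w) := by
            conv_lhs => rw [← Nat.sub_add_cancel hb, pow_succ]
            ring
        _ = w ^ (b - 1) := by rw [huw, mul_one]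
    · ring
  rw [key]
  obtain ⟨m, rfl⟩ | rfl : (∃ m, b = m + 2) ∨ b = 1 := by
    rcases Nat.lt_or_ge b 2 with hx | hx
    · right; omega
    · left; exact ⟨b - 2, by omega⟩
  · rw [if_neg (by omega)]
    have hred : (m + 2) - 1 = m + 1 := rfl
    rw [hred, map_add]
    have hc : coeff (R := R) (m + 1) (X * (w ^ (m + 2) * derivativeFun u)) =
        coeff (R := R) m (w ^ (m + 2) * derivativeFun u) := by
      have h := coeff_X_pow_mul (w ^ (m + 2) * derivativeFun u) 1 m
      rw [pow_one] at h
      exact h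
    rw [hc]
    have dw : derivativeFun w = -(w ^ 2 * derivativeFun u) := by
      have h1 : derivativeFun (u * w) = 0 := by rw [huw]; exact derivativeFun_one
      rw [derivativeFun_mul, smul_eq_mul, smul_eq_mul] at h1
      have h2 := congrArg (fun z => w * z) h1
      simp only [mul_add, mul_zero] at h2
      have h3 : w * (u * derivativeFun w) = derivativeFun w := by
        rw [← mul_assoc, mul_comm w u, huw, one_mul]
      rw [h3] at h2
      linear_combination h2
    have dwp : derivativeFun (w ^ (m + 1)) = -((m + 1) • (w ^ (m + 2) * derivativeFun u)) := by
      rw [derivativeFun_pow, dw]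
      simp only [nsmul_eq_mul]
      push_cast
      ring
    have hco := coeff_derivativeFun' (w ^ (m + 1)) m
    rw [dwp] at hco
    have hsum : (m + 1 : ℕ) • (coeff (R := R) (m + 1) (w ^ (m + 1)) +
        coeff (R := R) m (w ^ (m + 2) * derivativeFun u)) = 0 := by
      have h4 : -((m + 1 : ℕ) • coeff (R := R) m (w ^ (m + 2) * derivativeFun u)) =
          coeff (R := R) (m + 1) (w ^ (m + 1)) * ((m : R) + 1) := by
        rw [← hco, map_neg, map_nsmul]
      simp only [nsmul_eq_mul] at h4 ⊢
      push_cast at h4 ⊢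
      linear_combination -h4
    have hq : ((m + 1 : ℚ)) • (coeff (R := R) (m + 1) (w ^ (m + 1)) +
        coeff (R := R) m (w ^ (m + 2) * derivativeFun u)) = 0 := by
      rw [show ((m + 1 : ℚ)) = ((m + 1 : ℕ) : ℚ) by push_cast; ring,
        Nat.cast_smul_eq_nsmul]
      exact hsum
    rcases smul_eq_zero.mp hq with h | h
    · exact absurd h (by positivity)
    · exact h
  · simp only [if_pos rfl]
    simp [pow_one, map_add]

end LagAux

namespace LagAux
variable {R : Type*} [CommRing R] [Algebra ℚ R]

theorem claimC (Q h w : PowerSeries R) (h0 : constantCoeff (R := R) h = 0)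
    (hh : h = X * pcomp Q h) (huw : pcomp Q h * w = 1) (m k : ℕ) (hk : 1 ≤ k) :
    coeff (R := R) m ((pcomp Q h) ^ (k - 1) * derivativeFun h) = coeff (R := R) m (Q ^ (m + k)) := by
  set u := pcomp Q h with hu
  have hsplit : u ^ (k - 1) * derivativeFun h =
      pcomp (Q ^ (m + k)) h * (w ^ (m + 1) * derivativeFun h) := by
    rw [pcomp_pow _ _ h0, ← hu]
    have : u ^ (m + k) * w ^ (m + 1) = u ^ (k - 1) := by
      have hmk : m + k = (k - 1) + (m + 1) := by omega
      rw [hmk, pow_add, mul_assoc, ← mul_pow, huw, one_pow, mul_one]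
    rw [← mul_assoc, this]
  have hterm : ∀ c, c ≤ m → h ^ c * (w ^ (m + 1) * derivativeFun h) =
      X ^ c * (w ^ (m + 1 - c) * derivativeFun (X * u)) := by
    intro c hc
    have hx : u ^ c * w ^ (m + 1) = w ^ (m + 1 - c) := by
      rw [show m + 1 = (m + 1 - c) + c by omega, pow_add, ← mul_assoc,
        mul_comm (u ^ c), mul_assoc, ← mul_pow, huw, one_pow, mul_one]
      congr 1
      omega
    conv_lhs => rw [hh]
    rw [mul_pow]
    linear_combination (X ^ c * derivativeFun (X * u)) * hx
  rw [hsplit, swap_mul _ _ _ h0]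
  rw [Finset.sum_eq_single m]
  · rw [hterm m le_rfl, coeff_X_pow_mul']
    rw [if_pos (by omega), Nat.sub_self, show m + 1 - m = 1 by omega]
    have := atomK u w huw 1 (by omega)
    rw [if_pos rfl] at this
    rw [show (1 : ℕ) - 1 = 0 from rfl] at this
    rw [this, mul_one]
  · intro c hc hcm
    have hcle : c ≤ m := Nat.le_of_lt_succ (Finset.mem_range.mp hc)
    rw [hterm c hcle, coeff_X_pow_mul']
    rw [if_pos (by omega)]
    have hb : 1 ≤ m + 1 - c := by omega
    have := atomK u w huw (m + 1 - c) hb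
    rw [if_neg (by omega)] at this
    rw [show m - c = (m + 1 - c) - 1 by omega, this, mul_zero]
  · intro hm
    exact absurd (Finset.self_mem_range_succ m) hm

theorem core (Q h w : PowerSeries R) (h0 : constantCoeff (R := R) h = 0)
    (hh : h = X * pcomp Q h) (huw : pcomp Q h * w = 1) (n k : ℕ)
    (hk1 : 1 ≤ k) (hkn : k ≤ n) :
    coeff (R := R) n (h ^ k) * (n : R) = (k : R) * coeff (R := R) (n - k) (Q ^ n) := by
  have hn1 : 1 ≤ n := le_trans hk1 hkn
  have hd : coeff (R := R) (n - 1) (derivativeFun (h ^ k)) = coeff (R := R) n (h ^ k) * (n : R) := by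
    rw [coeff_derivativeFun', show n - 1 + 1 = n by omega]
    push_cast [show ((n - 1 : ℕ) : R) + 1 = (n : R) by
      rw [show (n : ℕ) = (n - 1) + 1 by omega]; push_cast; ring]
    rfl
  have hpow : derivativeFun (h ^ k) = k • (h ^ (k - 1) * derivativeFun h) := by
    conv_lhs => rw [show k = (k - 1) + 1 by omega]
    rw [derivativeFun_pow, show k - 1 + 1 = k by omega]
  rw [← hd, hpow, map_nsmul]
  have hsplit : h ^ (k - 1) * derivativeFun h =
      X ^ (k - 1) * ((pcomp Q h) ^ (k - 1) * derivativeFun h) := by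
    conv_lhs => rw [hh]
    rw [mul_pow, ← hh, mul_assoc]
  rw [hsplit, coeff_X_pow_mul']
  rw [if_pos (by omega), show n - 1 - (k - 1) = n - k by omega]
  rw [claimC Q h w h0 hh huw (n - k) k hk1, show n - k + k = n by omega]
  rw [nsmul_eq_mul]

end LagAux

namespace LagAux
variable {R : Type*} [CommRing R] [Algebra ℚ R]

theorem main_aux (Q φ h w : PowerSeries R)
    (h0 : constantCoeff (R := R) h = 0) (hh : h = X * pcomp Q h)
    (hφ : constantCoeff (R := R) φ = 0) (huw : pcomp Q h * w = 1)
    (n : ℕ) (hn : 0 < n) :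
    (n : ℚ) • coeff (R := R) n (pcomp φ h) =
      coeff (R := R) (n - 1) (derivativeFun φ * Q ^ n) := by
  rw [coeff_pcomp, Finset.smul_sum, Finset.sum_range_succ']
  rw [coeff_mul, Finset.Nat.sum_antidiagonal_eq_sum_range_succ_mk,
    show (n - 1).succ = n by omega]
  have h0term : (n : ℚ) • (coeff (R := R) 0 φ * coeff (R := R) n (h ^ 0)) = 0 := by
    rw [coeff_zero_eq_constantCoeff_apply, hφ, zero_mul, smul_zero]
  rw [h0term, add_zero]
  refine Finset.sum_congr rfl fun i hi => ?_
  have hi' : i < n := Finset.mem_range.mp hi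
  have hc := core Q h w h0 hh huw n (i + 1) (by omega) (by omega)
  rw [coeff_derivativeFun']
  have hsm : ∀ x : R, (n : ℚ) • x = (n : R) * x := fun x => by
    rw [show ((n : ℕ) : ℚ) • x = algebraMap ℚ R ((n : ℕ) : ℚ) * x from Algebra.smul_def _ _,
      map_natCast]
  rw [hsm, show n - 1 - i = n - (i + 1) by omega]
  push_cast at hc ⊢
  linear_combination (coeff (R := R) (i + 1) φ) * hc

end LagAux


open LagAux

/-- Classical Lagrange inversion: if `h(x)` is the unique formal power series with `h(0)=0`
satisfying `h = x·Q(h)` for `Q` with invertible constant term, then for any `φ` with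
`φ(0)=0` and all `n > 0`: `[x^n] φ(h(x)) = (1/n)·[t^{n-1}](φ'(t)·Q(t)^n)`. -/
theorem lagrange_inversion {R : Type*} [CommRing R] [Algebra ℚ R]
    (Q φ h : PowerSeries R) (hQ : IsUnit (constantCoeff (R := R) Q))
    (h0 : constantCoeff (R := R) h = 0) (hh : h = X * pcomp Q h)
    (hφ : constantCoeff (R := R) φ = 0) :
    ∀ n : ℕ, 0 < n →
      coeff (R := R) n (pcomp φ h) =
        ((n : ℚ)⁻¹) • coeff (R := R) (n - 1) (PowerSeries.derivativeFun φ * Q ^ n) := by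
  intro n hn
  have hcu : constantCoeff (R := R) (pcomp Q h) = constantCoeff (R := R) Q := by
    have := coeff_pcomp Q h 0
    simpa [coeff_zero_eq_constantCoeff_apply] using this
  have hU : IsUnit (pcomp Q h) := isUnit_iff_constantCoeff.mpr (by rw [hcu]; exact hQ)
  obtain ⟨W, hW⟩ := hU
  have huw : pcomp Q h * ↑W⁻¹ = 1 := by rw [← hW]; exact W.mul_inv
  have key := main_aux Q φ h (↑W⁻¹) h0 hh hφ huw n hn
  rw [← key, smul_smul, inv_mul_cancel₀ (by exact_mod_cast hn.ne' : (n : ℚ) ≠ 0), one_smul]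
end

section
/- Limit formula for Chern classes from exterior powers: for a rank-e vector bundle E with Chern roots x_1,...,x_e (working in the Chow/cohomology ring truncated above degree l), lim_{λ→0⁺} (1-e^{-λ})^{l-e} Π_{i=1}^e (e^{(λ-x_i)/2} - e^{-(λ-x_i)/2}) = (-1)^l c_l(E), where the limit is taken coefficient-wise after substituting y^{-1} = e^{-λ}. -/
open Filter Finset

/-- The multivariate power series `e^{c·x_i}` in the variables `x_1,…,x_e`. -/
noncomputable def expXi (e : ℕ) (c : ℝ) (i : Fin e) : MvPowerSeries (Fin e) ℝ :=
  fun d => if d = Finsupp.single i (d i) then c ^ (d i) / ((d i).factorial : ℝ) else 0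

lemma coeff_prod_diag {e : ℕ} (G : Fin e → ℕ → ℝ) (d : Fin e →₀ ℕ)
    (f : Fin e → MvPowerSeries (Fin e) ℝ)
    (hf : ∀ i m, MvPowerSeries.coeff (R := ℝ) m (f i)
      = if m = Finsupp.single i (m i) then G i (m i) else 0) :
    MvPowerSeries.coeff (R := ℝ) d (∏ i : Fin e, f i) = ∏ i : Fin e, G i (d i) := by
  classical
  rw [MvPowerSeries.coeff_prod]
  set l₀ : Fin e →₀ (Fin e →₀ ℕ) :=
    Finsupp.equivFunOnFinite.symm (fun i => Finsupp.single i (d i)) with hl₀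
  have hl₀app : ∀ i, l₀ i = Finsupp.single i (d i) := fun i => rfl
  have hmem : l₀ ∈ finsuppAntidiag Finset.univ d := by
    rw [mem_finsuppAntidiag]
    constructor
    · ext j
      rw [Finsupp.finset_sum_apply]
      simp [hl₀app, Finsupp.single_apply]
    · exact subset_univ _
  rw [Finset.sum_eq_single_of_mem l₀ hmem]
  · apply Finset.prod_congr rfl
    intro i _
    rw [hf, hl₀app, if_pos]
    · simp
    · simp
  · intro b hb hne
    by_contra h
    have hfac : ∀ i, b i = Finsupp.single i (b i i) := by
      intro i
      by_contra hi
      exact h (Finset.prod_eq_zero (mem_univ i) (by rw [hf, if_neg hi]))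
    apply hne
    rw [mem_finsuppAntidiag] at hb
    have hsum := hb.1
    have hval : ∀ j, d j = b j j := by
      intro j
      conv_lhs => rw [← hsum]
      rw [Finsupp.finset_sum_apply]
      calc ∑ i : Fin e, b i j = ∑ i : Fin e, (Finsupp.single i (b i i)) j := by
            apply Finset.sum_congr rfl; intro i _; rw [← hfac i]
        _ = b j j := by simp [Finsupp.single_apply]
    ext i j
    rw [hl₀app, hfac i, ← hval i]

lemma msum_apply {e : ℕ} (t : Finset (Fin e)) (j : Fin e) :
    (∑ i ∈ t, Finsupp.single i (1:ℕ)) j = if j ∈ t then 1 else 0 := by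
  rw [Finsupp.finset_sum_apply]
  simp [Finsupp.single_apply]

lemma dsum_eq {e : ℕ} (d : Fin e →₀ ℕ) : (d.sum fun _ n => n) = ∑ i : Fin e, d i :=
  Finsupp.sum_fintype _ _ (fun _ => rfl)

lemma coeff_esymm_eq {e : ℕ} (l : ℕ) (d : Fin e →₀ ℕ) :
    MvPolynomial.coeff d (MvPolynomial.esymm (Fin e) ℝ l) =
      if (∀ i, d i ≤ 1) ∧ (d.sum fun _ n => n) = l then 1 else 0 := by
  classical
  rw [MvPolynomial.esymm_eq_sum_monomial, MvPolynomial.coeff_sum]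
  simp_rw [MvPolynomial.coeff_monomial]
  by_cases hP : (∀ i, d i ≤ 1) ∧ (d.sum fun _ n => n) = l
  · rw [if_pos hP]
    obtain ⟨h1, h2⟩ := hP
    have hsupp : ∀ j, j ∈ d.support ↔ d j = 1 := by
      intro j
      rw [Finsupp.mem_support_iff]
      have := h1 j; omega
    have hcard : d.support.card = l := by
      calc d.support.card = ∑ j ∈ d.support, 1 := by simp
        _ = ∑ j ∈ d.support, d j := Finset.sum_congr rfl (fun j hj => ((hsupp j).1 hj).symm)
        _ = l := h2
    rw [Finset.sum_eq_single_of_mem d.support (Finset.mem_powersetCard_univ.mpr hcard)]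
    · rw [if_pos]
      ext j
      rw [msum_apply]
      by_cases hj : j ∈ d.support
      · rw [if_pos hj, (hsupp j).1 hj]
      · rw [if_neg hj]
        rw [Finsupp.mem_support_iff, not_not] at hj
        omega
    · intro b hb hne
      rw [if_neg]
      intro hc
      apply hne
      have happ : ∀ j, d j = if j ∈ b then 1 else 0 := by
        intro j; rw [← hc, msum_apply]
      ext j
      rw [hsupp j, happ j]
      constructor
      · intro h; simp [h]
      · intro h; by_contra hj; simp [hj] at h
  · rw [if_neg hP]
    apply Finset.sum_eq_zero
    intro t ht
    rw [if_neg]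
    intro hc
    apply hP
    have happ : ∀ j, d j = if j ∈ t then 1 else 0 := by
      intro j; rw [← hc, msum_apply]
    constructor
    · intro i; rw [happ i]; split <;> omega
    · rw [dsum_eq]
      rw [Finset.mem_powersetCard_univ] at ht
      calc ∑ i : Fin e, d i = ∑ i : Fin e, if i ∈ t then 1 else 0 :=
            Finset.sum_congr rfl (fun i _ => happ i)
        _ = t.card := by simp
        _ = l := ht

/-- Limit formula for Chern classes from exterior powers: with Chern roots `x_1,…,x_e`
(the variables of `MvPowerSeries (Fin e) ℝ`), for every monomial of total degree `≤ l`,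
`lim_{λ→0⁺} (1-e^{-λ})^{l-e} Π_{i=1}^e (e^{(λ-x_i)/2} - e^{-(λ-x_i)/2})`
equals the corresponding coefficient of `(-1)^l c_l(E) = (-1)^l e_l(x_1,…,x_e)`. -/
theorem chern_class_limit_formula (e l : ℕ) (d : Fin e →₀ ℕ)
    (hd : (d.sum fun _ n => n) ≤ l) :
    Tendsto
      (fun lam : ℝ =>
        (1 - Real.exp (-lam)) ^ ((l : ℤ) - (e : ℤ)) *
          MvPowerSeries.coeff (R := ℝ) d
            (∏ i : Fin e,
              (Real.exp (lam / 2) • expXi e (-(1 / 2)) i -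
                Real.exp (-(lam / 2)) • expXi e (1 / 2) i)))
      (nhdsWithin 0 (Set.Ioi 0))
      (nhds ((-1 : ℝ) ^ l * MvPolynomial.coeff d (MvPolynomial.esymm (Fin e) ℝ l))) := by
  classical
  -- notation
  set P : Fin e → Prop := fun i => Even (d i) with hP
  set z : ℕ := (Finset.univ.filter P).card with hz
  set k : ℕ := (Finset.univ.filter fun i => ¬ P i).card with hk
  have hzk : z + k = e := by
    rw [hz, hk, Finset.card_filter_add_card_filter_not]
    simp
  have hodd_one : ∀ i, ¬ P i → 1 ≤ d i := by
    intro i hi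
    by_contra h
    push_neg at h
    interval_cases h' : d i
    · exact hi (by simp [hP, h'])
  have hsum_univ : (d.sum fun _ n => n) = ∑ i : Fin e, d i := dsum_eq d
  have hk_le_sum : k ≤ ∑ i ∈ Finset.univ.filter fun i => ¬ P i, d i := by
    rw [hk, Finset.card_eq_sum_ones]
    exact Finset.sum_le_sum (fun i hi => hodd_one i (Finset.mem_filter.mp hi).2)
  have hfilter_le : (∑ i ∈ Finset.univ.filter (fun i => ¬ P i), d i) ≤ ∑ i : Fin e, d i :=
    Finset.sum_le_sum_of_subset (Finset.filter_subset _ _)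
  have hkl : k ≤ l := le_trans hk_le_sum (le_trans hfilter_le (hsum_univ ▸ hd))
  set N : ℕ := l - k with hN
  set C : ℝ := ∏ i : Fin e, ((1/2:ℝ) ^ (d i) / ((d i).factorial : ℝ)) with hC
  -- Step 1: coefficient formula
  have hcoeff : ∀ lam : ℝ,
      MvPowerSeries.coeff (R := ℝ) d
        (∏ i : Fin e,
          (Real.exp (lam / 2) • expXi e (-(1 / 2)) i -
            Real.exp (-(lam / 2)) • expXi e (1 / 2) i)) =
      ∏ i : Fin e, (((-1:ℝ) ^ (d i) * Real.exp (lam / 2) - Real.exp (-(lam / 2))) *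
        ((1/2:ℝ) ^ (d i) / ((d i).factorial : ℝ))) := by
    intro lam
    rw [coeff_prod_diag
      (fun i n => ((-1:ℝ) ^ n * Real.exp (lam / 2) - Real.exp (-(lam / 2))) *
        ((1/2:ℝ) ^ n / (n.factorial : ℝ))) d]
    intro i m
    rw [map_sub, MvPowerSeries.coeff_smul, MvPowerSeries.coeff_smul]
    have h1 : MvPowerSeries.coeff (R := ℝ) m (expXi e (-(1/2)) i)
        = if m = Finsupp.single i (m i) then (-(1/2):ℝ) ^ (m i) / ((m i).factorial : ℝ) else 0 := rfl
    have h2 : MvPowerSeries.coeff (R := ℝ) m (expXi e (1/2) i)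
        = if m = Finsupp.single i (m i) then ((1/2):ℝ) ^ (m i) / ((m i).factorial : ℝ) else 0 := rfl
    rw [h1, h2]
    split_ifs with h
    · rw [neg_pow]
      ring
    · ring
  -- Step 2: splitting the product
  have hsplit : ∀ lam : ℝ,
      (∏ i : Fin e, (((-1:ℝ) ^ (d i) * Real.exp (lam / 2) - Real.exp (-(lam / 2))) *
        ((1/2:ℝ) ^ (d i) / ((d i).factorial : ℝ)))) =
      (Real.exp (lam / 2) - Real.exp (-(lam / 2))) ^ z *
        (-(Real.exp (lam / 2) + Real.exp (-(lam / 2)))) ^ k * C := by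
    intro lam
    rw [Finset.prod_mul_distrib, ← hC]
    congr 1
    rw [← Finset.prod_filter_mul_prod_filter_not Finset.univ P]
    congr 1
    · rw [Finset.prod_congr rfl (fun i hi => ?_), Finset.prod_const, hz]
      have hev : Even (d i) := (Finset.mem_filter.mp hi).2
      rw [hev.neg_one_pow, one_mul]
    · rw [Finset.prod_congr rfl (fun i hi => ?_), Finset.prod_const, hk]
      have hod : ¬ Even (d i) := (Finset.mem_filter.mp hi).2
      rw [(Nat.not_even_iff_odd.mp hod).neg_one_pow]
      ring
  -- Step 3: the comparison function
  set g : ℝ → ℝ := fun lam =>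
    (1 - Real.exp (-lam)) ^ N * (Real.exp (lam / 2)) ^ z *
      (-(Real.exp (lam / 2) + Real.exp (-(lam / 2)))) ^ k * C with hg
  have heqOn : ∀ lam ∈ Set.Ioi (0:ℝ),
      (1 - Real.exp (-lam)) ^ ((l : ℤ) - (e : ℤ)) *
        MvPowerSeries.coeff (R := ℝ) d
          (∏ i : Fin e,
            (Real.exp (lam / 2) • expXi e (-(1 / 2)) i -
              Real.exp (-(lam / 2)) • expXi e (1 / 2) i)) = g lam := by
    intro lam hlam
    have hpos : (0:ℝ) < 1 - Real.exp (-lam) := by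
      have : Real.exp (-lam) < 1 := Real.exp_lt_one_iff.mpr (by simpa using hlam)
      linarith
    have hne : (1 - Real.exp (-lam)) ≠ 0 := ne_of_gt hpos
    have hEF : Real.exp (lam / 2) - Real.exp (-(lam / 2))
        = Real.exp (lam / 2) * (1 - Real.exp (-lam)) := by
      rw [mul_sub, mul_one, ← Real.exp_add]
      ring_nf
    rw [hcoeff, hsplit, hEF, mul_pow]
    have hzpow : (1 - Real.exp (-lam)) ^ ((l : ℤ) - (e : ℤ)) * (1 - Real.exp (-lam)) ^ z
        = (1 - Real.exp (-lam)) ^ N := by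
      rw [← zpow_natCast (1 - Real.exp (-lam)) z, ← zpow_add₀ hne,
        ← zpow_natCast (1 - Real.exp (-lam)) N]
      congr 1
      omega
    rw [hg]
    calc (1 - Real.exp (-lam)) ^ ((l:ℤ) - (e:ℤ)) *
          ((Real.exp (lam / 2)) ^ z * (1 - Real.exp (-lam)) ^ z *
            (-(Real.exp (lam / 2) + Real.exp (-(lam / 2)))) ^ k * C)
        = ((1 - Real.exp (-lam)) ^ ((l:ℤ) - (e:ℤ)) * (1 - Real.exp (-lam)) ^ z) *
            ((Real.exp (lam / 2)) ^ z *
              (-(Real.exp (lam / 2) + Real.exp (-(lam / 2)))) ^ k * C) := by ring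
      _ = _ := by rw [hzpow]; ring
  -- Step 4: g is continuous and its limit
  have hgc : Continuous g := by
    rw [hg]
    fun_prop
  have hg0 : g 0 = (0:ℝ) ^ N * (-2:ℝ) ^ k * C := by
    rw [hg]
    simp only [neg_zero, Real.exp_zero, zero_div, one_pow, mul_one]
    norm_num
  -- Step 5: identify the limit value
  have hval : (0:ℝ) ^ N * (-2:ℝ) ^ k * C
      = (-1 : ℝ) ^ l * MvPolynomial.coeff d (MvPolynomial.esymm (Fin e) ℝ l) := by
    rw [coeff_esymm_eq]
    by_cases hkey : k = l
    · -- forced structure of d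
      have hNzero : N = 0 := by omega
      have hd' : (∑ i : Fin e, d i) ≤ l := hsum_univ ▸ hd
      have hs1 : (∑ i ∈ Finset.univ.filter fun i => ¬ P i, d i) = k := by omega
      have hs2 : (∑ i : Fin e, d i) = k := by omega
      have hone : ∀ i ∈ Finset.univ.filter fun i => ¬ P i, d i = 1 := by
        have hsum1 : (∑ i ∈ Finset.univ.filter fun i => ¬ P i, (1:ℕ)) =
            ∑ i ∈ Finset.univ.filter fun i => ¬ P i, d i := by
          rw [hs1, hk]
          exact (Finset.card_eq_sum_ones _).symm
        intro i hi
        exact ((Finset.sum_eq_sum_iff_of_le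
          (fun j hj => hodd_one j (Finset.mem_filter.mp hj).2)).mp hsum1 i hi).symm
      have hzero : ∀ i ∈ Finset.univ.filter P, d i = 0 := by
        have hsplit2 : (∑ i ∈ Finset.univ.filter P, d i)
            + ∑ i ∈ Finset.univ.filter (fun i => ¬ P i), d i = ∑ i : Fin e, d i :=
          Finset.sum_filter_add_sum_filter_not Finset.univ P _
        have hz0 : (∑ i ∈ Finset.univ.filter P, d i) = 0 := by omega
        intro i hi
        exact Finset.sum_eq_zero_iff.mp hz0 i hi
      have hle1 : ∀ i, d i ≤ 1 := by
        intro i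
        by_cases hi : P i
        · rw [hzero i (Finset.mem_filter.mpr ⟨Finset.mem_univ i, hi⟩)]; omega
        · rw [hone i (Finset.mem_filter.mpr ⟨Finset.mem_univ i, hi⟩)]
      have hsuml : (d.sum fun _ n => n) = l := by
        rw [hsum_univ]; omega
      rw [if_pos ⟨hle1, hsuml⟩, hNzero, pow_zero, one_mul, mul_one]
      have hCval : C = (1/2:ℝ) ^ k := by
        have h1 : ∏ i ∈ Finset.univ.filter P, ((1/2:ℝ) ^ (d i) / ((d i).factorial : ℝ)) = 1 :=
          Finset.prod_eq_one (fun i hi => by rw [hzero i hi]; norm_num)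
        have h2 : ∏ i ∈ Finset.univ.filter (fun i => ¬ P i),
            ((1/2:ℝ) ^ (d i) / ((d i).factorial : ℝ)) = (1/2:ℝ) ^ k := by
          have h3 := Finset.prod_eq_pow_card
            (s := Finset.univ.filter fun i => ¬ P i)
            (f := fun i => (1/2:ℝ) ^ (d i) / ((d i).factorial : ℝ)) (b := (1/2:ℝ))
            (fun i hi => show (1/2:ℝ) ^ (d i) / ((d i).factorial : ℝ) = 1/2 by
              rw [hone i hi]; norm_num)
          rw [h3, ← hk]
        rw [hC, ← Finset.prod_filter_mul_prod_filter_not Finset.univ P, h1, h2, one_mul]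
      rw [hCval, ← hkey, ← mul_pow]
      norm_num
    · -- k < l, so N ≥ 1 and the coefficient vanishes
      have hNpos : 0 < N := by omega
      rw [zero_pow (by omega), zero_mul, zero_mul, if_neg, mul_zero]
      rintro ⟨hle1, hsuml⟩
      apply hkey
      have hone : ∀ i, ¬ P i → d i = 1 := by
        intro i hi
        have := hodd_one i hi
        have := hle1 i
        omega
      have hzero2 : ∀ i, P i → d i = 0 := by
        intro i hi
        have := hle1 i
        interval_cases h' : d i
        · rfl
        · exact absurd hi (by simp [hP, h'])
      have : (∑ i : Fin e, d i) = k := by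
        rw [← Finset.sum_filter_add_sum_filter_not Finset.univ P (fun i => d i)]
        rw [Finset.sum_congr rfl (fun i hi => hzero2 i (Finset.mem_filter.mp hi).2),
          Finset.sum_congr rfl (fun i hi => hone i (Finset.mem_filter.mp hi).2)]
        simp [hk]
      rw [hsum_univ] at hsuml
      omega
  -- conclude
  rw [← hval, ← hg0]
  apply Filter.Tendsto.congr' _ ((hgc.tendsto 0).mono_left nhdsWithin_le_nhds)
  filter_upwards [self_mem_nhdsWithin] with lam hlam
  exact (heqOn lam hlam).symm
end
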